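/- arXiv:1308.2992 — 2 statements merged into one kernel-verified Lean document; each statement's English description precedes it below -/
import Mathlib

section
/- Assume that $\mathbf{ex}$ is an initial segment, i.e. $\mathbf{ex}=\{1,\dots,m-r\}$ where $r$ is the number of indices $k\in[1,m]$ with $k^+=m+1$. Define $\delta_\ell=0$ if $\ell\in\mathbf{ex}$ and $\delta_\ell=1$ otherwise, and for $k\in\mathbf{ex}$ set $\mathbf{b}^k_\pm=\sum_{p\in\mathbf{ex}} b_{pk}\varepsilon_p\pm\delta_{k^+}\varepsilon_{k^+}$. Then $\rho_\mathbf{i}^+(\mathbf{b}^k_+)=\mathbf{b}^k$ and $\rho_\mathbf{i}^-(\mathbf{b}^k_-)=\mathbf{b}^k$ for every $k\in\mathbf{ex}$. -/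
open Finset

/-- The weight lattice `𝒫`: the free abelian group with basis `{αᵢ, ωᵢ : i ∈ I}`,
represented by pairs of coefficient vectors (first component: coefficients of the `αᵢ`,
second component: coefficients of the `ωᵢ`). -/
abbrev PLat (n : ℕ) := (Fin n → ℤ) × (Fin n → ℤ)

/-- The coroot lattice `𝒬^∨`: the free abelian group with basis `{αᵢ^∨ : i ∈ I}`,
represented by coefficient vectors. -/
abbrev QvLat (n : ℕ) := Fin n → ℤ

variable {n : ℕ}

/-- The basis element `α_j^∨` of `𝒬^∨`. -/
def coroot (j : Fin n) : QvLat n := fun k => if k = j then 1 else 0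

/-- The basis element `α_j` of `𝒫`. -/
def alP (j : Fin n) : PLat n := (fun k => if k = j then 1 else 0, 0)

/-- The basis element `ω_j` of `𝒫`. -/
def omP (j : Fin n) : PLat n := (0, fun k => if k = j then 1 else 0)

/-- The biadditive pairing `𝒬^∨ × 𝒫 → ℤ` with `(αᵢ^∨, α_j) = a_{ij}` and
`(αᵢ^∨, ω_j) = δ_{ij}`. -/
def pairQP (A : Fin n → Fin n → ℤ) (x : QvLat n) (lam : PLat n) : ℤ :=
  (∑ a, ∑ b, x a * A a b * lam.1 b) + ∑ a, x a * lam.2 a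

/-- The simple reflection `sᵢ` on `𝒫`: `sᵢ α_j = α_j - a_{ij} αᵢ`,
`sᵢ ω_j = ω_j - δ_{ij} αᵢ`. -/
def sP (A : Fin n → Fin n → ℤ) (a : Fin n) (lam : PLat n) : PLat n :=
  (fun j => if j = a then lam.1 a - ((∑ k, A a k * lam.1 k) + lam.2 a) else lam.1 j,
   lam.2)

/-- The simple reflection `sᵢ^∨` on `𝒬^∨`: `sᵢ^∨ α_j^∨ = α_j^∨ - a_{ji} αᵢ^∨`. -/
def sQ (A : Fin n → Fin n → ℤ) (a : Fin n) (x : QvLat n) : QvLat n :=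
  fun j => if j = a then x a - ∑ k, A k a * x k else x j

/-- `w_ℓ = s_{i₁} ∘ ⋯ ∘ s_{i_ℓ}` on `𝒫` (with `w₀ = id`). -/
def wP (A : Fin n → Fin n → ℤ) (ii : ℕ → Fin n) : ℕ → PLat n → PLat n
  | 0 => id
  | (l+1) => wP A ii l ∘ sP A (ii (l+1))

/-- `w_ℓ^∨ = s_{i₁}^∨ ∘ ⋯ ∘ s_{i_ℓ}^∨` on `𝒬^∨` (with `w₀ = id`). -/
def wQ (A : Fin n → Fin n → ℤ) (ii : ℕ → Fin n) : ℕ → QvLat n → QvLat n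
  | 0 => id
  | (l+1) => wQ A ii l ∘ sQ A (ii (l+1))

/-- `k⁺ = min({ℓ : k < ℓ ≤ m, i_ℓ = i_k} ∪ {m+1})`. -/
noncomputable def kplus (ii : ℕ → Fin n) (m k : ℕ) : ℕ :=
  sInf ({l | k < l ∧ l ≤ m ∧ ii l = ii k} ∪ {m+1})

/-- `k⁻ = max({ℓ : 1 ≤ ℓ < k, i_ℓ = i_k} ∪ {0})`. -/
noncomputable def kminus (ii : ℕ → Fin n) (k : ℕ) : ℕ :=
  sSup ({l | 1 ≤ l ∧ l < k ∧ ii l = ii k} ∪ {0})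

/-- The standard basis vector `ε_k` of `ℤ^m` (1-based index), with the convention
`ε_s = 0` for `s ∉ {1,…,m}`. -/
def eps (m k : ℕ) : Fin m → ℤ := fun j => if (j : ℕ) + 1 = k then 1 else 0

/-- `φ_𝐢(ε_k) = -ε_k - ε_{k⁻} - ∑_{ℓ : ℓ < k < ℓ⁺} a_{i_ℓ i_k} ε_ℓ`. -/
noncomputable def phiE (A : Fin n → Fin n → ℤ) (ii : ℕ → Fin n) (m k : ℕ) :
    Fin m → ℤ :=
  -(eps m k) - eps m (kminus ii k)
    - ∑ l : Fin m, (if (l:ℕ)+1 < k ∧ k < kplus ii m ((l:ℕ)+1)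
        then A (ii ((l:ℕ)+1)) (ii k) else 0) • eps m ((l:ℕ)+1)

/-- The endomorphism `φ_𝐢` of `ℤ^m`, extended additively from its values on the basis. -/
noncomputable def phiMap (A : Fin n → Fin n → ℤ) (ii : ℕ → Fin n) (m : ℕ)
    (v : Fin m → ℤ) : Fin m → ℤ :=
  ∑ k : Fin m, v k • phiE A ii m ((k:ℕ)+1)

/-- `φ'_𝐢(ε_ℓ) = -∑_{k=1}^{ℓ} (w_k^∨ α_{i_k}^∨, w_ℓ ω_{i_ℓ}) ε_k`. -/
def phiE' (A : Fin n → Fin n → ℤ) (ii : ℕ → Fin n) (m l : ℕ) : Fin m → ℤ :=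
  -∑ k : Fin m, (if (k:ℕ)+1 ≤ l then
      pairQP A (wQ A ii ((k:ℕ)+1) (coroot (ii ((k:ℕ)+1)))) (wP A ii l (omP (ii l)))
    else 0) • eps m ((k:ℕ)+1)

/-- The endomorphism `φ'_𝐢` of `ℤ^m`, extended additively from its values on the basis. -/
def phiMap' (A : Fin n → Fin n → ℤ) (ii : ℕ → Fin n) (m : ℕ)
    (v : Fin m → ℤ) : Fin m → ℤ :=
  ∑ l : Fin m, v l • phiE' A ii m ((l:ℕ)+1)

/-- `∂_𝐢 ε_k = ε_k - ε_{k⁻}`. -/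
noncomputable def derE (ii : ℕ → Fin n) (m k : ℕ) : Fin m → ℤ :=
  eps m k - eps m (kminus ii k)

/-- The endomorphism `∂_𝐢` of `ℤ^m`. -/
noncomputable def derMap (ii : ℕ → Fin n) (m : ℕ) (v : Fin m → ℤ) : Fin m → ℤ :=
  ∑ k : Fin m, v k • derE ii m ((k:ℕ)+1)

/-- `∫_𝐢 ε_k = ε_k + ε_{k⁻} + ε_{(k⁻)⁻} + ⋯` (summing along the chain `k > k⁻ > ⋯ > 0`). -/
noncomputable def intE (ii : ℕ → Fin n) (m : ℕ) (k : ℕ) : Fin m → ℤ :=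
  if h : kminus ii k < k then eps m k + intE ii m (kminus ii k) else eps m k
termination_by k
decreasing_by exact h

/-- The endomorphism `∫_𝐢` of `ℤ^m`. -/
noncomputable def intMap (ii : ℕ → Fin n) (m : ℕ) (v : Fin m → ℤ) : Fin m → ℤ :=
  ∑ k : Fin m, v k • intE ii m ((k:ℕ)+1)

/-- The skew-symmetric biadditive form `Λ_𝐢` on `ℤ^m` with
`Λ_𝐢(ε_k, ε_ℓ) = sgn(k-ℓ) c_{i_k i_ℓ}` where `c_{ij} = dᵢ a_{ij}`. -/
def LamF (A : Fin n → Fin n → ℤ) (d : Fin n → ℤ) (ii : ℕ → Fin n) (m : ℕ)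
    (a b : Fin m → ℤ) : ℤ :=
  ∑ k : Fin m, ∑ l : Fin m, a k * b l *
    ((((k:ℕ):ℤ) - ((l:ℕ):ℤ)).sign *
      (d (ii ((k:ℕ)+1)) * A (ii ((k:ℕ)+1)) (ii ((l:ℕ)+1))))

/-- The biadditive form `Φ_𝐢` on `ℤ^m` with `Φ_𝐢(ε_k,ε_ℓ) = -d_{i_k}` if `k = ℓ`,
`= -c_{i_ℓ i_k}` if `ℓ < k`, and `= 0` if `ℓ > k`. -/
def PhiF (A : Fin n → Fin n → ℤ) (d : Fin n → ℤ) (ii : ℕ → Fin n) (m : ℕ)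
    (a b : Fin m → ℤ) : ℤ :=
  ∑ k : Fin m, ∑ l : Fin m, a k * b l *
    (if (k:ℕ) = (l:ℕ) then -(d (ii ((k:ℕ)+1)))
     else if (l:ℕ) < (k:ℕ) then
       -(d (ii ((l:ℕ)+1)) * A (ii ((l:ℕ)+1)) (ii ((k:ℕ)+1)))
     else 0)

/-- The entry `b_{pk}` of the exchange matrix `B̃_𝐢`. -/
noncomputable def bcoef (A : Fin n → Fin n → ℤ) (ii : ℕ → Fin n) (m p k : ℕ) : ℤ :=
  if p = kminus ii k then -1
  else if p < k ∧ k < kplus ii m p ∧ kplus ii m p < kplus ii m k then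
    -(A (ii p) (ii k))
  else if k < p ∧ p < kplus ii m k ∧ kplus ii m k < kplus ii m p then
    A (ii p) (ii k)
  else if p = kplus ii m k then 1
  else 0

/-- The column `𝐛^k = ∑_p b_{pk} ε_p ∈ ℤ^m` of the exchange matrix. -/
noncomputable def bvec (A : Fin n → Fin n → ℤ) (ii : ℕ → Fin n) (m k : ℕ) :
    Fin m → ℤ :=
  fun p => bcoef A ii m ((p:ℕ)+1) k

/-- `ρ_𝐢⁺(ε_k) = ε_k + ∑_{ℓ<k, ℓ⁺=m+1} a_{i_ℓ i_k} ε_ℓ`. -/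
noncomputable def rhoPE (A : Fin n → Fin n → ℤ) (ii : ℕ → Fin n) (m k : ℕ) :
    Fin m → ℤ :=
  eps m k + ∑ l : Fin m, (if (l:ℕ)+1 < k ∧ kplus ii m ((l:ℕ)+1) = m+1
      then A (ii ((l:ℕ)+1)) (ii k) else 0) • eps m ((l:ℕ)+1)

/-- `ρ_𝐢⁻(ε_k) = ε_k - ∑_{ℓ≤k, ℓ⁺=m+1} a_{i_ℓ i_k} ε_ℓ`. -/
noncomputable def rhoME (A : Fin n → Fin n → ℤ) (ii : ℕ → Fin n) (m k : ℕ) :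
    Fin m → ℤ :=
  eps m k - ∑ l : Fin m, (if (l:ℕ)+1 ≤ k ∧ kplus ii m ((l:ℕ)+1) = m+1
      then A (ii ((l:ℕ)+1)) (ii k) else 0) • eps m ((l:ℕ)+1)

/-- The endomorphism `ρ_𝐢⁺` of `ℤ^m`. -/
noncomputable def rhoPMap (A : Fin n → Fin n → ℤ) (ii : ℕ → Fin n) (m : ℕ)
    (v : Fin m → ℤ) : Fin m → ℤ :=
  ∑ k : Fin m, v k • rhoPE A ii m ((k:ℕ)+1)

/-- The endomorphism `ρ_𝐢⁻` of `ℤ^m`. -/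
noncomputable def rhoMMap (A : Fin n → Fin n → ℤ) (ii : ℕ → Fin n) (m : ℕ)
    (v : Fin m → ℤ) : Fin m → ℤ :=
  ∑ k : Fin m, v k • rhoME A ii m ((k:ℕ)+1)

/-- `𝐚_λ = -∑_{k=1}^m (w_k^∨ α_{i_k}^∨, w_m λ) ε_k ∈ ℤ^m`. -/
def avec (A : Fin n → Fin n → ℤ) (ii : ℕ → Fin n) (m : ℕ) (lam : PLat n) :
    Fin m → ℤ :=
  fun k => -(pairQP A (wQ A ii ((k:ℕ)+1) (coroot (ii ((k:ℕ)+1)))) (wP A ii m lam))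

/-- `|𝐚| = ∑_{k=1}^m a_k α_{i_k} ∈ 𝒬 ⊆ 𝒫`. -/
def degP (ii : ℕ → Fin n) (m : ℕ) (a : Fin m → ℤ) : PLat n :=
  (fun j => ∑ k : Fin m, if ii ((k:ℕ)+1) = j then a k else 0, 0)

/-- The pairing `(μ, λ) = ∑ mᵢ dᵢ (αᵢ^∨, λ)` for `μ = ∑ mᵢ αᵢ ∈ 𝒬` and `λ ∈ 𝒫`
(induced by identifying `αᵢ` with `dᵢ αᵢ^∨`). -/
def pairAl (A : Fin n → Fin n → ℤ) (d : Fin n → ℤ) (mu lam : PLat n) : ℤ :=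
  ∑ j, mu.1 j * (d j * pairQP A (coroot j) lam)

/-- `δ_ℓ = 0` if `ℓ ∈ 𝐞𝐱` and `δ_ℓ = 1` otherwise. -/
noncomputable def deltaEx (ii : ℕ → Fin n) (m l : ℕ) : ℤ :=
  if 1 ≤ l ∧ kplus ii m l ≤ m then 0 else 1

/-- The truncation `𝐛^k₊ = ∑_{p ∈ 𝐞𝐱} b_{pk} ε_p + δ_{k⁺} ε_{k⁺}`. -/
noncomputable def bvecP (A : Fin n → Fin n → ℤ) (ii : ℕ → Fin n) (m k : ℕ) :
    Fin m → ℤ :=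
  ((fun p : Fin m => if kplus ii m ((p:ℕ)+1) ≤ m then bcoef A ii m ((p:ℕ)+1) k else 0) : Fin m → ℤ)
    + deltaEx ii m (kplus ii m k) • eps m (kplus ii m k)

/-- The truncation `𝐛^k₋ = ∑_{p ∈ 𝐞𝐱} b_{pk} ε_p - δ_{k⁺} ε_{k⁺}`. -/
noncomputable def bvecM (A : Fin n → Fin n → ℤ) (ii : ℕ → Fin n) (m k : ℕ) :
    Fin m → ℤ :=
  ((fun p : Fin m => if kplus ii m ((p:ℕ)+1) ≤ m then bcoef A ii m ((p:ℕ)+1) k else 0) : Fin m → ℤ)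
    - deltaEx ii m (kplus ii m k) • eps m (kplus ii m k)


section Aux

variable {n : ℕ}

lemma kplus_le_succ (ii : ℕ → Fin n) (m k : ℕ) : kplus ii m k ≤ m + 1 :=
  Nat.sInf_le (Or.inr rfl)

lemma kplus_spec {ii : ℕ → Fin n} {m k : ℕ} (h : kplus ii m k ≤ m) :
    k < kplus ii m k ∧ kplus ii m k ≤ m ∧ ii (kplus ii m k) = ii k := by
  have hmem : kplus ii m k ∈ ({l | k < l ∧ l ≤ m ∧ ii l = ii k} ∪ {m+1} : Set ℕ) :=
    Nat.sInf_mem ⟨m+1, Or.inr rfl⟩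
  rcases hmem with h' | h'
  · exact h'
  · simp only [Set.mem_singleton_iff] at h'
    omega

lemma kminus_lt {ii : ℕ → Fin n} {k : ℕ} (hk : 1 ≤ k) : kminus ii k < k := by
  have hb : BddAbove ({l | 1 ≤ l ∧ l < k ∧ ii l = ii k} ∪ {0} : Set ℕ) := by
    refine ⟨k, ?_⟩
    rintro x (⟨_, h, _⟩ | h)
    · omega
    · simp only [Set.mem_singleton_iff] at h; omega
  have hmem := Nat.sSup_mem (s := ({l | 1 ≤ l ∧ l < k ∧ ii l = ii k} ∪ {0} : Set ℕ))
    ⟨0, Or.inr rfl⟩ hb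
  rcases hmem with h' | h'
  · exact h'.2.1
  · simp only [Set.mem_singleton_iff] at h'
    unfold kminus
    omega

variable {m : ℕ}

lemma sum_mul_if (c : Fin m → ℤ) (j : Fin m) :
    ∑ l : Fin m, c l * (if (j:ℕ)+1 = (l:ℕ)+1 then 1 else 0) = c j := by
  have h0 : ∀ b : Fin m, b ≠ j → c b * (if (j:ℕ)+1 = (b:ℕ)+1 then 1 else 0) = 0 := by
    intro b hb
    rw [if_neg, mul_zero]
    intro h; exact hb (Fin.ext (by omega))
  rw [Finset.sum_eq_single_of_mem j (Finset.mem_univ j) (fun b _ hb => h0 b hb),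
    if_pos rfl, mul_one]

lemma rhoPMap_apply (A : Fin n → Fin n → ℤ) (ii : ℕ → Fin n) (v : Fin m → ℤ) (j : Fin m) :
    rhoPMap A ii m v j = v j + ∑ l : Fin m, v l *
      (if (j:ℕ)+1 < (l:ℕ)+1 ∧ kplus ii m ((j:ℕ)+1) = m+1
        then A (ii ((j:ℕ)+1)) (ii ((l:ℕ)+1)) else 0) := by
  simp only [rhoPMap, rhoPE, eps, Finset.sum_apply, Pi.add_apply, Pi.smul_apply, smul_eq_mul]
  have hin : ∀ k' : Fin m,
      (∑ l : Fin m, (if (l:ℕ)+1 < (k':ℕ)+1 ∧ kplus ii m ((l:ℕ)+1) = m+1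
          then A (ii ((l:ℕ)+1)) (ii ((k':ℕ)+1)) else 0) *
        (if (j:ℕ)+1 = (l:ℕ)+1 then 1 else 0))
      = (if (j:ℕ)+1 < (k':ℕ)+1 ∧ kplus ii m ((j:ℕ)+1) = m+1
          then A (ii ((j:ℕ)+1)) (ii ((k':ℕ)+1)) else 0) :=
    fun k' => sum_mul_if (fun l => if (l:ℕ)+1 < (k':ℕ)+1 ∧ kplus ii m ((l:ℕ)+1) = m+1
          then A (ii ((l:ℕ)+1)) (ii ((k':ℕ)+1)) else 0) j
  simp only [hin, mul_add]
  rw [Finset.sum_add_distrib, sum_mul_if]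

lemma rhoMMap_apply (A : Fin n → Fin n → ℤ) (ii : ℕ → Fin n) (v : Fin m → ℤ) (j : Fin m) :
    rhoMMap A ii m v j = v j - ∑ l : Fin m, v l *
      (if (j:ℕ)+1 ≤ (l:ℕ)+1 ∧ kplus ii m ((j:ℕ)+1) = m+1
        then A (ii ((j:ℕ)+1)) (ii ((l:ℕ)+1)) else 0) := by
  simp only [rhoMMap, rhoME, eps, Finset.sum_apply, Pi.sub_apply, Pi.smul_apply, smul_eq_mul]
  have hin : ∀ k' : Fin m,
      (∑ l : Fin m, (if (l:ℕ)+1 ≤ (k':ℕ)+1 ∧ kplus ii m ((l:ℕ)+1) = m+1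
          then A (ii ((l:ℕ)+1)) (ii ((k':ℕ)+1)) else 0) *
        (if (j:ℕ)+1 = (l:ℕ)+1 then 1 else 0))
      = (if (j:ℕ)+1 ≤ (k':ℕ)+1 ∧ kplus ii m ((j:ℕ)+1) = m+1
          then A (ii ((j:ℕ)+1)) (ii ((k':ℕ)+1)) else 0) :=
    fun k' => sum_mul_if (fun l => if (l:ℕ)+1 ≤ (k':ℕ)+1 ∧ kplus ii m ((l:ℕ)+1) = m+1
          then A (ii ((l:ℕ)+1)) (ii ((k':ℕ)+1)) else 0) j
  simp only [hin, mul_sub]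
  rw [Finset.sum_sub_distrib, sum_mul_if]

lemma bvec_apply (A : Fin n → Fin n → ℤ) (ii : ℕ → Fin n) (k : ℕ) (j : Fin m) :
    bvec A ii m k j = bcoef A ii m ((j:ℕ)+1) k := rfl

lemma bvecP_apply (A : Fin n → Fin n → ℤ) (ii : ℕ → Fin n) (k : ℕ) (j : Fin m) :
    bvecP A ii m k j
      = (if kplus ii m ((j:ℕ)+1) ≤ m then bcoef A ii m ((j:ℕ)+1) k else 0)
        + deltaEx ii m (kplus ii m k) * (if (j:ℕ)+1 = kplus ii m k then 1 else 0) := rfl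

lemma bvecM_apply (A : Fin n → Fin n → ℤ) (ii : ℕ → Fin n) (k : ℕ) (j : Fin m) :
    bvecM A ii m k j
      = (if kplus ii m ((j:ℕ)+1) ≤ m then bcoef A ii m ((j:ℕ)+1) k else 0)
        - deltaEx ii m (kplus ii m k) * (if (j:ℕ)+1 = kplus ii m k then 1 else 0) := rfl

end Aux

/-- `ρ_𝐢⁺(𝐛^k₊) = 𝐛^k` and `ρ_𝐢⁻(𝐛^k₋) = 𝐛^k` for `k ∈ 𝐞𝐱`,
assuming `𝐞𝐱 = {1,…,m-r}` where `r = #{k ∈ [1,m] : k⁺ = m+1}`. -/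
theorem rho_bvec_truncated {n m : ℕ} (hm : 1 ≤ m)
    (A : Fin n → Fin n → ℤ) (d : Fin n → ℤ)
    (hA : ∀ i, A i i = 2) (hd : ∀ i, 0 < d i)
    (hsym : ∀ i j, d i * A i j = d j * A j i)
    (ii : ℕ → Fin n)
    (r : ℕ) (hr : r = Set.ncard {k : ℕ | 1 ≤ k ∧ k ≤ m ∧ kplus ii m k = m + 1})
    (hex : ∀ k, 1 ≤ k → k ≤ m → (kplus ii m k ≤ m ↔ k ≤ m - r))
    (k : ℕ) (hk1 : 1 ≤ k) (hk2 : kplus ii m k ≤ m) :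
    rhoPMap A ii m (bvecP A ii m k) = bvec A ii m k ∧
    rhoMMap A ii m (bvecM A ii m k) = bvec A ii m k := by
  obtain ⟨hkk, hkm', hiik⟩ := kplus_spec hk2
  have hkmin := kminus_lt (ii := ii) hk1
  have hkmr : k ≤ m - r := (hex k hk1 (by omega)).mp hk2
  obtain ⟨jk, hjk⟩ : ∃ jk : Fin m, (jk:ℕ)+1 = kplus ii m k :=
    ⟨⟨kplus ii m k - 1, by omega⟩, by show kplus ii m k - 1 + 1 = kplus ii m k; omega⟩
  constructor
  · funext j
    have hjlt := j.isLt
    rw [rhoPMap_apply]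
    by_cases hj : kplus ii m ((j:ℕ)+1) ≤ m
    · have hS0 : (∑ l : Fin m, bvecP A ii m k l *
          (if (j:ℕ)+1 < (l:ℕ)+1 ∧ kplus ii m ((j:ℕ)+1) = m+1
            then A (ii ((j:ℕ)+1)) (ii ((l:ℕ)+1)) else 0)) = 0 := by
        refine Finset.sum_eq_zero fun l _ => ?_
        have hcond : ¬((j:ℕ)+1 < (l:ℕ)+1 ∧ kplus ii m ((j:ℕ)+1) = m+1) := by omega
        rw [if_neg hcond, mul_zero]
      rw [hS0, add_zero, bvec_apply, bvecP_apply, if_pos hj]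
      by_cases he : (j:ℕ)+1 = kplus ii m k
      · have hd0 : deltaEx ii m (kplus ii m k) = 0 := by
          unfold deltaEx
          rw [if_pos ⟨by omega, by rw [← he]; exact hj⟩]
        rw [hd0, zero_mul, add_zero]
      · rw [if_neg he, mul_zero, add_zero]
    · have hjm1 : kplus ii m ((j:ℕ)+1) = m + 1 := by
        have := kplus_le_succ ii m ((j:ℕ)+1); omega
      have hjgt : m - r < (j:ℕ)+1 := by
        by_contra hc
        exact hj ((hex ((j:ℕ)+1) (by omega) (by omega)).mpr (by omega))
      have hS1 : (∑ l : Fin m,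
          (if kplus ii m ((l:ℕ)+1) ≤ m then bcoef A ii m ((l:ℕ)+1) k else 0) *
          (if (j:ℕ)+1 < (l:ℕ)+1 ∧ kplus ii m ((j:ℕ)+1) = m+1
            then A (ii ((j:ℕ)+1)) (ii ((l:ℕ)+1)) else 0)) = 0 := by
        refine Finset.sum_eq_zero fun l _ => ?_
        by_cases hl : kplus ii m ((l:ℕ)+1) ≤ m
        · have hlm := l.isLt
          have hlle : (l:ℕ)+1 ≤ m - r := (hex _ (by omega) (by omega)).mp hl
          have hcond : ¬((j:ℕ)+1 < (l:ℕ)+1 ∧ kplus ii m ((j:ℕ)+1) = m+1) := by omega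
          rw [if_neg hcond, mul_zero]
        · rw [if_neg hl, zero_mul]
      have hz : ∀ b : Fin m, b ≠ jk →
          (deltaEx ii m (kplus ii m k) * (if (b:ℕ)+1 = kplus ii m k then 1 else 0)) *
          (if (j:ℕ)+1 < (b:ℕ)+1 ∧ kplus ii m ((j:ℕ)+1) = m+1
            then A (ii ((j:ℕ)+1)) (ii ((b:ℕ)+1)) else 0) = 0 := by
        intro b hb
        have hne : (b:ℕ)+1 ≠ kplus ii m k := fun hbe => hb (Fin.ext (by omega))
        rw [if_neg hne, mul_zero, zero_mul]
      have hS2 : (∑ l : Fin m,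
          (deltaEx ii m (kplus ii m k) * (if (l:ℕ)+1 = kplus ii m k then 1 else 0)) *
          (if (j:ℕ)+1 < (l:ℕ)+1 ∧ kplus ii m ((j:ℕ)+1) = m+1
            then A (ii ((j:ℕ)+1)) (ii ((l:ℕ)+1)) else 0))
          = deltaEx ii m (kplus ii m k) *
            (if (j:ℕ)+1 < kplus ii m k then A (ii ((j:ℕ)+1)) (ii k) else 0) := by
        rw [Finset.sum_eq_single_of_mem jk (Finset.mem_univ jk) (fun b _ hb => hz b hb),
          hjk, if_pos rfl, mul_one, hiik]
        congr 1
        by_cases hc : (j:ℕ)+1 < kplus ii m k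
        · rw [if_pos ⟨hc, hjm1⟩, if_pos hc]
        · rw [if_neg (fun h => hc h.1), if_neg hc]
      simp only [bvecP_apply, add_mul]
      rw [Finset.sum_add_distrib, hS1, hS2, bvec_apply, if_neg hj, zero_add]
      simp only [bcoef]
      rcases lt_trichotomy ((j:ℕ)+1) (kplus ii m k) with hlt | heq | hgt
      · have hdel : deltaEx ii m (kplus ii m k) = 1 := by
          unfold deltaEx
          rw [if_neg]
          rintro ⟨-, hc⟩
          have := (hex (kplus ii m k) (by omega) hkm').mp hc
          omega
        rw [hdel]
        split_ifs <;> first | ring1 | (exfalso; omega)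
      · have hdel : deltaEx ii m (kplus ii m k) = 1 := by
          unfold deltaEx
          rw [if_neg]
          rintro ⟨-, hc⟩
          rw [← heq] at hc
          omega
        rw [hdel]
        split_ifs <;> first | ring1 | (exfalso; omega)
      · split_ifs <;> first | ring1 | (exfalso; omega)
  · funext j
    have hjlt := j.isLt
    rw [rhoMMap_apply]
    by_cases hj : kplus ii m ((j:ℕ)+1) ≤ m
    · have hS0 : (∑ l : Fin m, bvecM A ii m k l *
          (if (j:ℕ)+1 ≤ (l:ℕ)+1 ∧ kplus ii m ((j:ℕ)+1) = m+1
            then A (ii ((j:ℕ)+1)) (ii ((l:ℕ)+1)) else 0)) = 0 := by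
        refine Finset.sum_eq_zero fun l _ => ?_
        have hcond : ¬((j:ℕ)+1 ≤ (l:ℕ)+1 ∧ kplus ii m ((j:ℕ)+1) = m+1) := by omega
        rw [if_neg hcond, mul_zero]
      rw [hS0, sub_zero, bvec_apply, bvecM_apply, if_pos hj]
      by_cases he : (j:ℕ)+1 = kplus ii m k
      · have hd0 : deltaEx ii m (kplus ii m k) = 0 := by
          unfold deltaEx
          rw [if_pos ⟨by omega, by rw [← he]; exact hj⟩]
        rw [hd0, zero_mul, sub_zero]
      · rw [if_neg he, mul_zero, sub_zero]
    · have hjm1 : kplus ii m ((j:ℕ)+1) = m + 1 := by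
        have := kplus_le_succ ii m ((j:ℕ)+1); omega
      have hjgt : m - r < (j:ℕ)+1 := by
        by_contra hc
        exact hj ((hex ((j:ℕ)+1) (by omega) (by omega)).mpr (by omega))
      have hS1 : (∑ l : Fin m,
          (if kplus ii m ((l:ℕ)+1) ≤ m then bcoef A ii m ((l:ℕ)+1) k else 0) *
          (if (j:ℕ)+1 ≤ (l:ℕ)+1 ∧ kplus ii m ((j:ℕ)+1) = m+1
            then A (ii ((j:ℕ)+1)) (ii ((l:ℕ)+1)) else 0)) = 0 := by
        refine Finset.sum_eq_zero fun l _ => ?_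
        by_cases hl : kplus ii m ((l:ℕ)+1) ≤ m
        · have hlm := l.isLt
          have hlle : (l:ℕ)+1 ≤ m - r := (hex _ (by omega) (by omega)).mp hl
          have hcond : ¬((j:ℕ)+1 ≤ (l:ℕ)+1 ∧ kplus ii m ((j:ℕ)+1) = m+1) := by omega
          rw [if_neg hcond, mul_zero]
        · rw [if_neg hl, zero_mul]
      have hz : ∀ b : Fin m, b ≠ jk →
          (deltaEx ii m (kplus ii m k) * (if (b:ℕ)+1 = kplus ii m k then 1 else 0)) *
          (if (j:ℕ)+1 ≤ (b:ℕ)+1 ∧ kplus ii m ((j:ℕ)+1) = m+1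
            then A (ii ((j:ℕ)+1)) (ii ((b:ℕ)+1)) else 0) = 0 := by
        intro b hb
        have hne : (b:ℕ)+1 ≠ kplus ii m k := fun hbe => hb (Fin.ext (by omega))
        rw [if_neg hne, mul_zero, zero_mul]
      have hS2 : (∑ l : Fin m,
          (deltaEx ii m (kplus ii m k) * (if (l:ℕ)+1 = kplus ii m k then 1 else 0)) *
          (if (j:ℕ)+1 ≤ (l:ℕ)+1 ∧ kplus ii m ((j:ℕ)+1) = m+1
            then A (ii ((j:ℕ)+1)) (ii ((l:ℕ)+1)) else 0))
          = deltaEx ii m (kplus ii m k) *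
            (if (j:ℕ)+1 ≤ kplus ii m k then A (ii ((j:ℕ)+1)) (ii k) else 0) := by
        rw [Finset.sum_eq_single_of_mem jk (Finset.mem_univ jk) (fun b _ hb => hz b hb),
          hjk, if_pos rfl, mul_one, hiik]
        congr 1
        by_cases hc : (j:ℕ)+1 ≤ kplus ii m k
        · rw [if_pos ⟨hc, hjm1⟩, if_pos hc]
        · rw [if_neg (fun h => hc h.1), if_neg hc]
      simp only [bvecM_apply, sub_mul]
      rw [Finset.sum_sub_distrib, hS1, hS2, bvec_apply, if_neg hj, zero_sub]
      simp only [bcoef]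
      rcases lt_trichotomy ((j:ℕ)+1) (kplus ii m k) with hlt | heq | hgt
      · have hdel : deltaEx ii m (kplus ii m k) = 1 := by
          unfold deltaEx
          rw [if_neg]
          rintro ⟨-, hc⟩
          have := (hex (kplus ii m k) (by omega) hkm').mp hc
          omega
        rw [hdel]
        split_ifs <;> first | ring1 | (exfalso; omega)
      · have hdel : deltaEx ii m (kplus ii m k) = 1 := by
          unfold deltaEx
          rw [if_neg]
          rintro ⟨-, hc⟩
          rw [← heq] at hc
          omega
        have hAe : A (ii ((j:ℕ)+1)) (ii k) = 2 := by
          rw [heq, hiik, hA]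
        rw [hdel, hAe]
        split_ifs <;> first | ring1 | (exfalso; omega)
      · split_ifs <;> first | ring1 | (exfalso; omega)
end

section
/- For every $\mathbf{a}=(a_1,\dots,a_m)\in\mathbb{Z}^m$ and every $\lambda\in\mathcal{P}$ one has $\Lambda_\mathbf{i}(\mathbf{a},\mathbf{a}_\lambda)=\big(|\mathbf{a}|,\ w_m\lambda+\lambda\big)$, where $|\mathbf{a}|=\sum_{k=1}^m a_k\alpha_{i_k}\in\mathcal{Q}$. -/
open Finset

variable {n : ℕ}

section Aux
variable {n : ℕ} (A : Fin n → Fin n → ℤ)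

lemma pairQP_add (x : QvLat n) (p q : PLat n) :
    pairQP A x (p + q) = pairQP A x p + pairQP A x q := by
  simp only [pairQP, Prod.fst_add, Prod.snd_add, Pi.add_apply, mul_add,
    Finset.sum_add_distrib]
  ring

lemma pairQP_sub (x : QvLat n) (p q : PLat n) :
    pairQP A x (p - q) = pairQP A x p - pairQP A x q := by
  simp only [pairQP, Prod.fst_sub, Prod.snd_sub, Pi.sub_apply, mul_sub,
    Finset.sum_sub_distrib]
  ring

lemma pairQP_smul (c : ℤ) (x : QvLat n) (p : PLat n) :
    pairQP A x (c • p) = c * pairQP A x p := by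
  simp only [pairQP, Prod.smul_fst, Prod.smul_snd, Pi.smul_apply, smul_eq_mul,
    mul_add, Finset.mul_sum]
  congr 1
  · exact Finset.sum_congr rfl fun a _ => Finset.sum_congr rfl fun b _ => by ring
  · exact Finset.sum_congr rfl fun a _ => by ring

lemma pairQP_zero (x : QvLat n) : pairQP A x (0 : PLat n) = 0 := by
  simp [pairQP]

lemma pairQP_sum {β : Type*} (x : QvLat n) (s : Finset β) (f : β → PLat n) :
    pairQP A x (∑ l ∈ s, f l) = ∑ l ∈ s, pairQP A x (f l) := by
  classical
  induction s using Finset.induction with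
  | empty => simp [pairQP_zero]
  | insert _ _ h ih => rw [Finset.sum_insert h, Finset.sum_insert h, pairQP_add, ih]

lemma pairQP_sub_smul_left (x : QvLat n) (c : ℤ) (y : QvLat n) (p : PLat n) :
    pairQP A (x - c • y) p = pairQP A x p - c * pairQP A y p := by
  have h1 : ∀ a b : Fin n, (x a - c * y a) * A a b * p.1 b
      = x a * A a b * p.1 b - c * (y a * A a b * p.1 b) := fun a b => by ring
  have h2 : ∀ a : Fin n, (x a - c * y a) * p.2 a
      = x a * p.2 a - c * (y a * p.2 a) := fun a => by ring
  simp only [pairQP, Pi.sub_apply, Pi.smul_apply, smul_eq_mul, h1, h2,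
    Finset.sum_sub_distrib, ← Finset.mul_sum]
  ring

lemma pairQP_coroot (i : Fin n) (p : PLat n) :
    pairQP A (coroot i) p = (∑ b, A i b * p.1 b) + p.2 i := by
  simp [pairQP, coroot, ite_mul, Finset.sum_ite_eq']

lemma pairQP_alP (x : QvLat n) (j : Fin n) :
    pairQP A x (alP j) = ∑ a, x a * A a j := by
  simp [pairQP, alP, mul_ite, Finset.sum_ite_eq']

lemma pairQP_coroot_alP (i j : Fin n) :
    pairQP A (coroot i) (alP j) = A i j := by
  simp [pairQP_alP, coroot, ite_mul, Finset.sum_ite_eq']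

lemma sQ_eq (i : Fin n) (x : QvLat n) :
    sQ A i x = x - (∑ k, A k i * x k) • coroot i := by
  funext j
  by_cases h : j = i <;> simp [sQ, coroot, h]

lemma sP_eq (i : Fin n) (p : PLat n) :
    sP A i p = p - (pairQP A (coroot i) p) • alP i := by
  rw [pairQP_coroot]
  refine Prod.ext (funext fun j => ?_) ?_
  · by_cases h : j = i <;> simp [sP, alP, h]
  · simp [sP, alP]

lemma pair_inv (hA : ∀ i, A i i = 2) (i : Fin n) (x : QvLat n) (p : PLat n) :
    pairQP A (sQ A i x) (sP A i p) = pairQP A x p := by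
  rw [sQ_eq, sP_eq, pairQP_sub_smul_left, pairQP_sub, pairQP_sub,
    pairQP_smul, pairQP_smul, pairQP_coroot_alP, pairQP_alP, hA,
    pairQP_coroot]
  have h : ∑ k, A k i * x k = ∑ a, x a * A a i :=
    Finset.sum_congr rfl fun a _ => mul_comm _ _
  rw [h]
  ring

lemma pair_w_inv (hA : ∀ i, A i i = 2) (ii : ℕ → Fin n) (l : ℕ)
    (x : QvLat n) (p : PLat n) :
    pairQP A (wQ A ii l x) (wP A ii l p) = pairQP A x p := by
  induction l generalizing x p with
  | zero => rfl
  | succ l ih => rw [wQ, wP, Function.comp_apply, Function.comp_apply, ih, pair_inv A hA]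

end Aux

section Tail
variable {n : ℕ} (A : Fin n → Fin n → ℤ) (ii : ℕ → Fin n)

/-- `tailP A ii l m lam = s_{i_{l+1}} ⋯ s_{i_m} lam`. -/
def tailP (l : ℕ) : ℕ → PLat n → PLat n
  | 0, lam => lam
  | (m+1), lam => if l ≤ m then tailP l m (sP A (ii (m+1)) lam) else lam

lemma tailP_ge {l m : ℕ} (h : m ≤ l) (lam : PLat n) : tailP A ii l m lam = lam := by
  cases m with
  | zero => rfl
  | succ m => rw [tailP, if_neg (by omega)]

lemma wP_tailP {l m : ℕ} (h : l ≤ m) (lam : PLat n) :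
    wP A ii m lam = wP A ii l (tailP A ii l m lam) := by
  induction m generalizing lam with
  | zero =>
    interval_cases l
    rfl
  | succ m ih =>
    rcases Nat.lt_or_ge l (m+1) with h' | h'
    · rw [wP, Function.comp_apply, ih (by omega), tailP, if_pos (by omega)]
    · have : l = m + 1 := by omega
      subst this
      rw [tailP_ge A ii le_rfl]

lemma tailP_step {l m : ℕ} (h : l + 1 ≤ m) (lam : PLat n) :
    tailP A ii l m lam = sP A (ii (l+1)) (tailP A ii (l+1) m lam) := by
  induction m generalizing lam with
  | zero => omega
  | succ m ih =>
    rcases Nat.lt_or_ge (l+1) (m+1) with h' | h'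
    · rw [tailP, if_pos (by omega), ih (by omega), tailP, if_pos (by omega)]
    · have : l + 1 = m + 1 := by omega
      have hl : l = m := by omega
      subst hl
      rw [tailP, if_pos le_rfl, tailP_ge A ii le_rfl, tailP_ge A ii le_rfl]

lemma tailP_step' {l m : ℕ} (h : l + 1 ≤ m) (lam : PLat n) :
    tailP A ii l m lam = tailP A ii (l+1) m lam
      - (pairQP A (coroot (ii (l+1))) (tailP A ii (l+1) m lam)) • alP (ii (l+1)) := by
  rw [tailP_step A ii h, sP_eq]

lemma pcoef_eq (hA : ∀ i, A i i = 2) {l m : ℕ} (h : l + 1 ≤ m) (lam : PLat n) :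
    pairQP A (wQ A ii (l+1) (coroot (ii (l+1)))) (wP A ii m lam)
      = pairQP A (coroot (ii (l+1))) (tailP A ii (l+1) m lam) := by
  rw [wP_tailP A ii h, pair_w_inv A hA]

lemma sum_tailP (hA : ∀ i, A i i = 2) {j m : ℕ} (h : j ≤ m) (lam : PLat n) :
    ∑ l ∈ Finset.range j,
        (pairQP A (wQ A ii (l+1) (coroot (ii (l+1)))) (wP A ii m lam)) • alP (ii (l+1))
      = tailP A ii j m lam - tailP A ii 0 m lam := by
  induction j with
  | zero => simp
  | succ j ih =>
    rw [Finset.sum_range_succ, ih (by omega), pcoef_eq A ii hA h,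
      tailP_step' A ii h (lam := lam)]
    abel

end Tail

/-- `Λ_𝐢(𝐚, 𝐚_λ) = (|𝐚|, w_m λ + λ)`. -/
theorem Lambda_avec {n m : ℕ} (hm : 1 ≤ m)
    (A : Fin n → Fin n → ℤ) (d : Fin n → ℤ)
    (hA : ∀ i, A i i = 2) (hd : ∀ i, 0 < d i)
    (hsym : ∀ i j, d i * A i j = d j * A j i)
    (ii : ℕ → Fin n) (a : Fin m → ℤ) (lam : PLat n) :
    LamF A d ii m a (avec A ii m lam) =
      pairAl A d (degP ii m a) (wP A ii m lam + lam) := by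
  classical
  -- reduce RHS to a sum over k
  have hRHS : pairAl A d (degP ii m a) (wP A ii m lam + lam)
      = ∑ k : Fin m, a k * (d (ii ((k:ℕ)+1)) *
          pairQP A (coroot (ii ((k:ℕ)+1))) (wP A ii m lam + lam)) := by
    rw [pairAl]
    simp only [degP, Finset.sum_mul, ite_mul, zero_mul]
    rw [Finset.sum_comm]
    refine Finset.sum_congr rfl fun k _ => ?_
    simp [Finset.sum_ite_eq]
  rw [hRHS, LamF]
  refine Finset.sum_congr rfl fun k _ => ?_
  have hkm : (k:ℕ) + 1 ≤ m := k.isLt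
  have h0 : tailP A ii 0 m lam = wP A ii m lam :=
    (wP_tailP A ii (Nat.zero_le m) lam).symm
  have hmm : tailP A ii m m lam = lam := tailP_ge A ii le_rfl lam
  have ht : pairQP A (coroot (ii ((k:ℕ)+1))) (tailP A ii (k:ℕ) m lam)
      = -(pairQP A (coroot (ii ((k:ℕ)+1))) (tailP A ii ((k:ℕ)+1) m lam)) := by
    rw [tailP_step' A ii hkm, pairQP_sub, pairQP_smul, pairQP_coroot_alP, hA]
    ring
  have hkey : ∑ l ∈ Finset.range m,
      ((-(pairQP A (wQ A ii (l+1) (coroot (ii (l+1)))) (wP A ii m lam))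
        * (((k:ℕ):ℤ) - (l:ℤ)).sign) • alP (ii (l+1)))
      = (wP A ii m lam + lam)
        - (tailP A ii (k:ℕ) m lam + tailP A ii ((k:ℕ)+1) m lam) := by
    have e1 : ∀ l ∈ Finset.range (k:ℕ),
        ((-(pairQP A (wQ A ii (l+1) (coroot (ii (l+1)))) (wP A ii m lam))
          * (((k:ℕ):ℤ) - (l:ℤ)).sign) • alP (ii (l+1)))
        = -((pairQP A (wQ A ii (l+1) (coroot (ii (l+1)))) (wP A ii m lam))
            • alP (ii (l+1))) := by
      intro l hl
      rw [Finset.mem_range] at hl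
      rw [Int.sign_eq_one_of_pos (by omega), mul_one, neg_smul]
    have e2 : ((-(pairQP A (wQ A ii ((k:ℕ)+1) (coroot (ii ((k:ℕ)+1)))) (wP A ii m lam))
        * (((k:ℕ):ℤ) - ((k:ℕ):ℤ)).sign) • alP (ii ((k:ℕ)+1))) = (0 : PLat n) := by
      simp
    have e3 : ∀ l ∈ Finset.Ico ((k:ℕ)+1) m,
        ((-(pairQP A (wQ A ii (l+1) (coroot (ii (l+1)))) (wP A ii m lam))
          * (((k:ℕ):ℤ) - (l:ℤ)).sign) • alP (ii (l+1)))
        = ((pairQP A (wQ A ii (l+1) (coroot (ii (l+1)))) (wP A ii m lam))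
            • alP (ii (l+1))) := by
      intro l hl
      rw [Finset.mem_Ico] at hl
      rw [Int.sign_eq_neg_one_of_neg (by omega)]
      congr 1
      ring
    rw [← Finset.sum_range_add_sum_Ico _ hkm, Finset.sum_range_succ,
      Finset.sum_congr rfl e1, e2, Finset.sum_congr rfl e3, add_zero,
      Finset.sum_neg_distrib, Finset.sum_Ico_eq_sub _ hkm,
      sum_tailP A ii hA (le_of_lt k.isLt) lam, sum_tailP A ii hA le_rfl lam,
      sum_tailP A ii hA hkm lam, h0, hmm]
    abel
  simp only [avec]
  have step1 : ∀ l : Fin m,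
      a k * -(pairQP A (wQ A ii ((l:ℕ)+1) (coroot (ii ((l:ℕ)+1)))) (wP A ii m lam))
        * ((((k:ℕ):ℤ) - ((l:ℕ):ℤ)).sign
          * (d (ii ((k:ℕ)+1)) * A (ii ((k:ℕ)+1)) (ii ((l:ℕ)+1))))
      = a k * (d (ii ((k:ℕ)+1)) *
          ((-(pairQP A (wQ A ii ((l:ℕ)+1) (coroot (ii ((l:ℕ)+1)))) (wP A ii m lam))
            * (((k:ℕ):ℤ) - ((l:ℕ):ℤ)).sign)
            * pairQP A (coroot (ii ((k:ℕ)+1))) (alP (ii ((l:ℕ)+1))))) := fun l => by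
    rw [pairQP_coroot_alP]
    ring
  rw [Finset.sum_congr rfl (fun l _ => step1 l), ← Finset.mul_sum, ← Finset.mul_sum]
  simp only [← pairQP_smul]
  rw [← pairQP_sum]
  rw [Fin.sum_univ_eq_sum_range (fun l =>
    ((-(pairQP A (wQ A ii (l+1) (coroot (ii (l+1)))) (wP A ii m lam))
      * (((k:ℕ):ℤ) - (l:ℤ)).sign) • alP (ii (l+1))))]
  rw [hkey, pairQP_sub, pairQP_add, pairQP_add, ht]
  simp only [pairQP_smul, pairQP_add]
  ring
end
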